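/- In the construction described in the context, if v^ℓ ∉ H, then the revenue of the VVCA A_H on v^ℓ is 0. -/
import Mathlib


open Finset MeasureTheory

/-- An `n`-bidder, `m`-item allocation: pairwise disjoint bundles of items. -/
def Alloc (n m : ℕ) : Type :=
  {o : Fin n → Finset (Fin m) // ∀ i j, i ≠ j → o i ∩ o j = ∅}

instance (n m : ℕ) : Inhabited (Alloc n m) :=
  ⟨⟨fun _ => ∅, fun _ _ _ => by simp⟩⟩

instance (n m : ℕ) : Fintype (Alloc n m) :=
  Subtype.fintype _

instance (n m : ℕ) : Nonempty (Alloc n m) := ⟨default⟩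

/-- Maximum of a real-valued function over all allocations. -/
noncomputable def allocMax {n m : ℕ} (f : Alloc n m → ℝ) : ℝ :=
  Finset.univ.sup' Finset.univ_nonempty f

/-- A fixed (canonical) maximizer of a real-valued function over all allocations. -/
noncomputable def chooseMax {n m : ℕ} (f : Alloc n m → ℝ) : Alloc n m :=
  Classical.choose (Finset.exists_max_image Finset.univ f Finset.univ_nonempty)

/-- `os` maximizes the boosted weighted social welfare. -/
def IsMaxAlloc {n m : ℕ} (w : Fin n → ℝ) (lam : Alloc n m → ℝ)
    (v : Fin n → Finset (Fin m) → ℝ) (os : Alloc n m) : Prop :=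
  ∀ o : Alloc n m, (∑ j, w j * v j (o.1 j)) + lam o ≤ (∑ j, w j * v j (os.1 j)) + lam os

/-- Revenue of the AMA with weights `w`, boosts `lam`, on valuations `v`, when the
chosen (welfare-maximizing) allocation is `os`. -/
noncomputable def amaRev {n m : ℕ} (w : Fin n → ℝ) (lam : Alloc n m → ℝ)
    (v : Fin n → Finset (Fin m) → ℝ) (os : Alloc n m) : ℝ :=
  ∑ j, (w j)⁻¹ *
    (allocMax (fun o => (∑ l ∈ Finset.univ.erase j, w l * v l (o.1 l)) + lam o)
      - ((∑ l ∈ Finset.univ.erase j, w l * v l (os.1 l)) + lam os))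

/-- The boosts of the `c`-MBA. -/
def mbaLam {n m : ℕ} (c : ℝ) : Alloc n m → ℝ :=
  fun o => if ∃ i, o.1 i = Finset.univ then c else 0

/-- Revenue of the `c`-MBA (with a fixed tie-breaking rule). -/
noncomputable def mbaRev {n m : ℕ} (v : Fin n → Finset (Fin m) → ℝ) (c : ℝ) : ℝ :=
  amaRev (fun _ => 1) (mbaLam c) v
    (chooseMax fun o => (∑ j, v j (o.1 j)) + mbaLam c o)

/-- Revenue of the MBARP with grand-bundle boost `c` and item reserve prices `r`
(with a fixed tie-breaking rule); the seller participates as bidder `0`. -/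
noncomputable def mbarpRev {n m : ℕ} (v : Fin n → Finset (Fin m) → ℝ) (c : ℝ)
    (r : Fin m → ℝ) : ℝ :=
  let vx : Fin (n + 1) → Finset (Fin m) → ℝ :=
    fun i b => Fin.cases (∑ j ∈ b, r j) (fun i' => v i' b) i
  let g : Fin (n + 1) → Alloc (n + 1) m → ℝ :=
    fun i o => (∑ l ∈ Finset.univ.erase i, vx l (o.1 l)) + mbaLam c o
  let os : Alloc (n + 1) m := chooseMax fun o => (∑ i, vx i (o.1 i)) + mbaLam c o
  ∑ i : Fin n, (allocMax (g i.succ) - g i.succ os)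

/-- Empirical Rademacher complexity of a class `F` on the sample `S`. -/
noncomputable def empRad {X : Type*} (F : Set (X → ℝ)) {N : ℕ} (S : Fin N → X) : ℝ :=
  ((2 : ℝ) ^ N)⁻¹ * ∑ σ : Fin N → Bool,
    ⨆ f ∈ F, (N : ℝ)⁻¹ * ∑ i, (if σ i then (1 : ℝ) else -1) * f (S i)

/-- Rademacher complexity: expected empirical Rademacher complexity over i.i.d. samples. -/
noncomputable def radComp {X : Type*} [MeasurableSpace X] (D : Measure X)
    (F : Set (X → ℝ)) (N : ℕ) : ℝ :=
  ∫ S, empRad F S ∂(Measure.pi fun _ : Fin N => D)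

/-- Pseudo-shattering of the tuple `x` by the class `F`, with witnesses `z`. -/
def PShatters {X : Type*} (F : Set (X → ℝ)) {k : ℕ} (x : Fin k → X) : Prop :=
  ∃ z : Fin k → ℝ, ∀ T : Finset (Fin k), ∃ f ∈ F,
    (∀ i, i ∈ T → f (x i) ≤ z i) ∧ (∀ i, i ∉ T → z i < f (x i))

/-- A valuation is additive if it is determined by its values on singletons. -/
def AdditiveVal {n m : ℕ} (v : Fin n → Finset (Fin m) → ℝ) : Prop :=
  ∀ i b, v i b = ∑ j ∈ b, v i {j}

/-- The two-bidder additive valuation vector associated with the bundle `b`: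
bidder `0` values exactly the items of `bᶜ` at `1` each, and bidder `1` values
exactly the items of `b` at `1` each. -/
def vOf2 {m : ℕ} (b : Finset (Fin m)) : Fin 2 → Finset (Fin m) → ℝ :=
  fun i s => if i = 0 then ((s ∩ bᶜ).card : ℝ) else ((s ∩ b).card : ℝ)

/-- The per-bidder bundle boosts of the VVCA `A_H`: `c_{1,b̃ᶜ} = c_{2,b̃} = 0` for
every `b̃ ∈ H`, and every other boost equals `(1 − γ)/2`. -/
noncomputable def cbOf {m : ℕ} (H : Finset (Finset (Fin m))) (γ : ℝ) :
    Fin 2 → Finset (Fin m) → ℝ :=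
  fun i s =>
    if i = 0 then (if sᶜ ∈ H then 0 else (1 - γ) / 2)
    else (if s ∈ H then 0 else (1 - γ) / 2)

/-- In the VVCA lower-bound construction, if `v^ℓ ∉ H` then the
revenue of `A_H` on `v^ℓ` is `0`. -/
theorem stmt15 (m : ℕ) (hm : 2 ≤ m) (γ : ℝ) (hγ : γ ∈ Set.Ioo (0 : ℝ) 1)
    (H : Finset (Finset (Fin m))) (hH : ∀ b ∈ H, b ≠ ∅ ∧ b ≠ Finset.univ)
    (b : Finset (Fin m)) (hb0 : b ≠ ∅) (hb1 : b ≠ Finset.univ) (hb : b ∉ H)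
    (os : Alloc 2 m)
    (hos : IsMaxAlloc (fun _ => 1) (fun o => ∑ i, cbOf H γ i (o.1 i)) (vOf2 b) os) :
    amaRev (fun _ => 1) (fun o => ∑ i, cbOf H γ i (o.1 i)) (vOf2 b) os = 0 := by
  obtain ⟨hγ0, hγ1⟩ := hγ
  set c : ℝ := (1 - γ) / 2 with hc
  have hc0 : 0 ≤ c := by rw [hc]; linarith
  have cble : ∀ i s, cbOf H γ i s ≤ c := by
    intro i s
    unfold cbOf
    split_ifs <;> simp [hc] <;> linarith
  -- the efficient allocation
  have hdisj : ∀ i j : Fin 2, i ≠ j →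
      (fun i : Fin 2 => if i = 0 then bᶜ else b) i ∩
      (fun i : Fin 2 => if i = 0 then bᶜ else b) j = ∅ := by
    intro i j hij
    fin_cases i <;> fin_cases j <;> simp_all [Finset.inter_comm]
  set oeff : Alloc 2 m := ⟨fun i : Fin 2 => if i = 0 then bᶜ else b, hdisj⟩ with hoeff
  have key := hos oeff
  have h10 : (1 : Fin 2) ≠ 0 := by decide
  have hcb0 : cbOf H γ 0 bᶜ = c := by
    unfold cbOf; simp [compl_compl, hb, hc]
  have hcb1 : cbOf H γ 1 b = c := by
    unfold cbOf; simp [h10, hb, hc]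
  have hv00 : vOf2 b 0 bᶜ = (bᶜ.card : ℝ) := by unfold vOf2; simp
  have hv11 : vOf2 b 1 b = (b.card : ℝ) := by unfold vOf2; simp [h10]
  have hkey : (bᶜ.card : ℝ) + b.card + (c + c) ≤
      ((os.1 0 ∩ bᶜ).card : ℝ) + ((os.1 1 ∩ b).card : ℝ) +
        (cbOf H γ 0 (os.1 0) + cbOf H γ 1 (os.1 1)) := by
    have := key
    simp only [Fin.sum_univ_two, one_mul, hoeff] at this
    simp only [show ((0 : Fin 2) = 0) = True from by simp, if_true,
      show ((1 : Fin 2) = 0) = False from by simp [h10], if_false] at this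
    rw [hcb0, hcb1, hv00, hv11] at this
    have e0 : vOf2 b 0 (os.1 0) = (((os.1 0) ∩ bᶜ).card : ℝ) := by unfold vOf2; simp
    have e1 : vOf2 b 1 (os.1 1) = (((os.1 1) ∩ b).card : ℝ) := by unfold vOf2; simp [h10]
    rw [e0, e1] at this
    linarith
  -- derive the card equalities
  have hle0 : (os.1 0 ∩ bᶜ).card ≤ bᶜ.card := Finset.card_le_card Finset.inter_subset_right
  have hle1 : (os.1 1 ∩ b).card ≤ b.card := Finset.card_le_card Finset.inter_subset_right
  have hsum : (bᶜ.card : ℝ) + b.card ≤ ((os.1 0 ∩ bᶜ).card : ℝ) + ((os.1 1 ∩ b).card : ℝ) := by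
    have := cble 0 (os.1 0)
    have := cble 1 (os.1 1)
    linarith
  have hsumN : bᶜ.card + b.card ≤ (os.1 0 ∩ bᶜ).card + (os.1 1 ∩ b).card := by
    exact_mod_cast hsum
  have heq0 : os.1 0 ∩ bᶜ = bᶜ :=
    Finset.eq_of_subset_of_card_le Finset.inter_subset_right (by omega)
  have heq1 : os.1 1 ∩ b = b :=
    Finset.eq_of_subset_of_card_le Finset.inter_subset_right (by omega)
  have hsub0 : bᶜ ⊆ os.1 0 := (Finset.inter_eq_right.mp heq0)
  have hsub1 : b ⊆ os.1 1 := (Finset.inter_eq_right.mp heq1)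
  have hdis : os.1 0 ∩ os.1 1 = ∅ := os.2 0 1 (by decide)
  have hos0 : os.1 0 = bᶜ := by
    apply Finset.Subset.antisymm _ hsub0
    intro x hx
    by_contra hxc
    have hxb : x ∈ b := by simpa using hxc
    have : x ∈ os.1 0 ∩ os.1 1 := Finset.mem_inter.mpr ⟨hx, hsub1 hxb⟩
    rw [hdis] at this
    exact absurd this (Finset.notMem_empty x)
  have hos1 : os.1 1 = b := by
    apply Finset.Subset.antisymm _ hsub1
    intro x hx
    by_contra hxb
    have hxc : x ∈ bᶜ := by simpa using hxb
    have : x ∈ os.1 0 ∩ os.1 1 := Finset.mem_inter.mpr ⟨hsub0 hxc, hx⟩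
    rw [hdis] at this
    exact absurd this (Finset.notMem_empty x)
  -- compute the revenue
  have he0 : (Finset.univ.erase (0 : Fin 2)) = {1} := by decide
  have he1 : (Finset.univ.erase (1 : Fin 2)) = {0} := by decide
  have hmax : ∀ f : Alloc 2 m → ℝ, (∀ o, f o ≤ f os) → allocMax f = f os := by
    intro f hf
    refine le_antisymm (Finset.sup'_le _ _ fun o _ => hf o) (Finset.le_sup' f (Finset.mem_univ os))
  unfold amaRev
  rw [Fin.sum_univ_two]
  have hterm0 : allocMax (fun o : Alloc 2 m =>
      (∑ l ∈ Finset.univ.erase (0 : Fin 2), (1 : ℝ) * vOf2 b l (o.1 l)) +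
        ∑ i, cbOf H γ i (o.1 i)) =
      (∑ l ∈ Finset.univ.erase (0 : Fin 2), (1 : ℝ) * vOf2 b l (os.1 l)) +
        ∑ i, cbOf H γ i (os.1 i) := by
    apply hmax
    intro o
    simp only [he0, Finset.sum_singleton, one_mul, Fin.sum_univ_two]
    have e1 : vOf2 b 1 (o.1 1) = (((o.1 1) ∩ b).card : ℝ) := by unfold vOf2; simp [h10]
    have e1' : vOf2 b 1 (os.1 1) = (b.card : ℝ) := by rw [hos1]; exact hv11
    rw [e1, e1', hos0, hos1, hcb0, hcb1]
    have hcard : (((o.1 1) ∩ b).card : ℝ) ≤ (b.card : ℝ) := by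
      exact_mod_cast Finset.card_le_card Finset.inter_subset_right
    have := cble 0 (o.1 0)
    have := cble 1 (o.1 1)
    linarith
  have hterm1 : allocMax (fun o : Alloc 2 m =>
      (∑ l ∈ Finset.univ.erase (1 : Fin 2), (1 : ℝ) * vOf2 b l (o.1 l)) +
        ∑ i, cbOf H γ i (o.1 i)) =
      (∑ l ∈ Finset.univ.erase (1 : Fin 2), (1 : ℝ) * vOf2 b l (os.1 l)) +
        ∑ i, cbOf H γ i (os.1 i) := by
    apply hmax
    intro o
    simp only [he1, Finset.sum_singleton, one_mul, Fin.sum_univ_two]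
    have e0 : vOf2 b 0 (o.1 0) = (((o.1 0) ∩ bᶜ).card : ℝ) := by unfold vOf2; simp
    have e0' : vOf2 b 0 (os.1 0) = (bᶜ.card : ℝ) := by rw [hos0]; exact hv00
    rw [e0, e0', hos0, hos1, hcb0, hcb1]
    have hcard : (((o.1 0) ∩ bᶜ).card : ℝ) ≤ (bᶜ.card : ℝ) := by
      exact_mod_cast Finset.card_le_card Finset.inter_subset_right
    have := cble 0 (o.1 0)
    have := cble 1 (o.1 1)
    linarith
  rw [hterm0, hterm1]
  ring
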